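/- In a torsion-free group G that is commutative transitive (commuting with a fixed nontrivial element is a transitive relation, equivalently centralizers of nontrivial elements are abelian), every maximal abelian subgroup M is isolated: if g^n ∈ M for some integer n > 0, then g ∈ M. -/
import Mathlib

/-- In a torsion-free commutative-transitive group, maximal abelian subgroups
are isolated. -/
theorem stmt_1 {G : Type*} [Group G]
    (htf : ∀ g : G, ∀ n : ℕ, 0 < n → g ^ n = 1 → g = 1)
    (hct : ∀ a b c : G, a ≠ 1 → b ≠ 1 → c ≠ 1 →
      a * b = b * a → b * c = c * b → a * c = c * a)
    (M : Subgroup G)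
    (hMab : ∀ x ∈ M, ∀ y ∈ M, x * y = y * x)
    (hMmax : ∀ N : Subgroup G, (∀ x ∈ N, ∀ y ∈ N, x * y = y * x) → M ≤ N → N = M) :
    ∀ (g : G) (n : ℕ), 0 < n → g ^ n ∈ M → g ∈ M := by
  intro g n hn hgn
  by_cases hg1 : g ^ n = 1
  · have : g = 1 := htf g n hn hg1
    simpa [this] using M.one_mem
  -- N = centralizer of {g^n}
  set N := Subgroup.centralizer ({g ^ n} : Set G) with hN
  have hmemN : ∀ x : G, x ∈ N ↔ x * g ^ n = g ^ n * x := by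
    intro x
    simp only [hN, Subgroup.mem_centralizer_iff, Set.mem_singleton_iff, forall_eq]
    exact eq_comm
  have hNab : ∀ x ∈ N, ∀ y ∈ N, x * y = y * x := by
    intro x hx y hy
    rcases eq_or_ne x 1 with rfl | hx1
    · simp
    rcases eq_or_ne y 1 with rfl | hy1
    · simp
    exact hct x (g ^ n) y hx1 hg1 hy1 ((hmemN x).1 hx) ((hmemN y).1 hy).symm
  have hMN : M ≤ N := by
    intro m hm
    exact (hmemN m).2 (hMab m hm (g ^ n) hgn)
  have := hMmax N hNab hMN
  rw [← this, hmemN]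
  exact Commute.self_pow g n
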